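/- Let X be a Hilbert space, A, B nonempty closed convex subsets with A ∩ B ≠ ∅, and suppose (A,B) is regular (with v = 0, E = A ∩ B). Then for any starting point c₀, the alternating projection sequences c_n = P_A(d_n), d_n = P_B(c_{n-1}) satisfy dist(c_n, A ∩ B) → 0 and dist(d_n, A ∩ B) → 0. -/

import Mathlib

/-- `p` is the metric projection of `x` onto the set `C`. -/
def IsProjPt {X : Type*} [NormedAddCommGroup X] (C : Set X) (x p : X) : Prop :=
  p ∈ C ∧ ∀ y ∈ C, dist x p ≤ dist x y

lemma proj_key {X : Type*} [NormedAddCommGroup X] [InnerProductSpace ℝ X]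
    {C : Set X} (hC : Convex ℝ C) {x p z : X} (h : IsProjPt C x p) (hz : z ∈ C) :
    ‖x - p‖ ^ 2 + ‖p - z‖ ^ 2 ≤ ‖x - z‖ ^ 2 := by
  obtain ⟨hp, hmin⟩ := h
  haveI : Nonempty C := ⟨⟨p, hp⟩⟩
  have hinf : ‖x - p‖ = ⨅ w : C, ‖x - (w : X)‖ := by
    apply le_antisymm
    · exact le_ciInf fun w => by simpa [dist_eq_norm] using hmin w w.2
    · exact ciInf_le ⟨0, Set.forall_mem_range.2 fun w => norm_nonneg _⟩ (⟨p, hp⟩ : C)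
  have hin : ∀ w ∈ C, inner ℝ (x - p) (w - p) ≤ (0 : ℝ) :=
    (norm_eq_iInf_iff_real_inner_le_zero hC hp).1 hinf
  have hz' := hin z hz
  have hexp : ‖x - z‖ ^ 2 = ‖x - p‖ ^ 2 + 2 * inner ℝ (x - p) (p - z) + ‖p - z‖ ^ 2 := by
    have : x - z = (x - p) + (p - z) := by abel
    rw [this, norm_add_sq_real]
  have hneg : inner ℝ (x - p) (p - z) = -(inner ℝ (x - p) (z - p) : ℝ) := by
    rw [← inner_neg_right, neg_sub]
  rw [hexp, hneg]
  linarith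

theorem stmt12 {X : Type*} [NormedAddCommGroup X] [InnerProductSpace ℝ X] [CompleteSpace X]
    (A B : Set X)
    (hAc : IsClosed A) (hBc : IsClosed B) (hAconv : Convex ℝ A) (hBconv : Convex ℝ B)
    (hABne : (A ∩ B).Nonempty)
    (hreg : ∀ ε > (0 : ℝ), ∃ δ > (0 : ℝ), ∀ x : X,
      max (Metric.infDist x A) (Metric.infDist x B) ≤ δ → Metric.infDist x (A ∩ B) ≤ ε)
    (c d : ℕ → X)
    (hd : ∀ n : ℕ, IsProjPt B (c n) (d (n + 1)))
    (hc : ∀ n : ℕ, IsProjPt A (d (n + 1)) (c (n + 1))) :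
    Filter.Tendsto (fun n => Metric.infDist (c n) (A ∩ B)) Filter.atTop (nhds 0) ∧
    Filter.Tendsto (fun n => Metric.infDist (d n) (A ∩ B)) Filter.atTop (nhds 0) := by
  obtain ⟨z, hzA, hzB⟩ := hABne
  set g : ℕ → ℝ := fun n => ‖c n - z‖ ^ 2 with hg
  have key1 : ∀ n, ‖c n - d (n + 1)‖ ^ 2 + ‖d (n + 1) - z‖ ^ 2 ≤ g n :=
    fun n => proj_key hBconv (hd n) hzB
  have key2 : ∀ n, ‖d (n + 1) - c (n + 1)‖ ^ 2 + g (n + 1) ≤ ‖d (n + 1) - z‖ ^ 2 :=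
    fun n => proj_key hAconv (hc n) hzA
  have hanti : Antitone g := antitone_nat_of_succ_le fun n => by
    have h1 := key1 n
    have h2 := key2 n
    have := sq_nonneg ‖c n - d (n + 1)‖
    have := sq_nonneg ‖d (n + 1) - c (n + 1)‖
    nlinarith [sq_nonneg ‖c n - d (n + 1)‖]
  have hbdd : BddBelow (Set.range g) := ⟨0, Set.forall_mem_range.2 fun n => sq_nonneg _⟩
  have hgL : Filter.Tendsto g Filter.atTop (nhds (⨅ n, g n)) :=
    tendsto_atTop_ciInf hanti hbdd
  have hgL' : Filter.Tendsto (fun n => g (n + 1)) Filter.atTop (nhds (⨅ n, g n)) :=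
    hgL.comp (Filter.tendsto_add_atTop_nat 1)
  have hdiff : Filter.Tendsto (fun n => g n - g (n + 1)) Filter.atTop (nhds 0) := by
    simpa using hgL.sub hgL'
  -- gaps squared tend to 0
  have hsq1 : Filter.Tendsto (fun n => ‖c n - d (n + 1)‖ ^ 2) Filter.atTop (nhds 0) := by
    apply squeeze_zero (fun n => sq_nonneg _) _ hdiff
    intro n
    have h1 := key1 n
    have h2 := key2 n
    nlinarith [sq_nonneg ‖d (n + 1) - c (n + 1)‖]
  have hsq2 : Filter.Tendsto (fun n => ‖d (n + 1) - c (n + 1)‖ ^ 2) Filter.atTop (nhds 0) := by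
    apply squeeze_zero (fun n => sq_nonneg _) _ hdiff
    intro n
    have h1 := key1 n
    have h2 := key2 n
    nlinarith [sq_nonneg ‖c n - d (n + 1)‖]
  have h1 : Filter.Tendsto (fun n => ‖c n - d (n + 1)‖) Filter.atTop (nhds 0) := by
    have := (Real.continuous_sqrt.tendsto 0).comp hsq1
    have heq : ∀ n : ℕ, Real.sqrt (‖c n - d (n + 1)‖ ^ 2) = ‖c n - d (n + 1)‖ :=
      fun n => Real.sqrt_sq (norm_nonneg _)
    simpa [Function.comp_def, heq, Real.sqrt_zero] using this
  have h2 : Filter.Tendsto (fun n => ‖d (n + 1) - c (n + 1)‖) Filter.atTop (nhds 0) := by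
    have := (Real.continuous_sqrt.tendsto 0).comp hsq2
    have heq : ∀ n : ℕ, Real.sqrt (‖d (n + 1) - c (n + 1)‖ ^ 2) = ‖d (n + 1) - c (n + 1)‖ :=
      fun n => Real.sqrt_sq (norm_nonneg _)
    simpa [Function.comp_def, heq, Real.sqrt_zero] using this
  constructor
  · rw [Metric.tendsto_atTop]
    intro ε hε
    obtain ⟨δ, hδpos, hδ⟩ := hreg (ε / 2) (by linarith)
    rw [Metric.tendsto_atTop] at h1
    obtain ⟨N, hN⟩ := h1 δ hδpos
    refine ⟨max N 1, fun n hn => ?_⟩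
    obtain ⟨m, rfl⟩ : ∃ m, n = m + 1 :=
      Nat.exists_eq_add_of_le (le_trans (le_max_right N 1) hn)
      |>.imp fun m hm => by omega
    have hnN : N ≤ m + 1 := le_trans (le_max_left N 1) hn
    have hgap : ‖c (m + 1) - d (m + 2)‖ < δ := by
      have := hN (m + 1) hnN
      rwa [Real.dist_eq, sub_zero, abs_of_nonneg (norm_nonneg _)] at this
    have hA : Metric.infDist (c (m + 1)) A = 0 :=
      Metric.infDist_zero_of_mem (hc m).1
    have hB : Metric.infDist (c (m + 1)) B ≤ δ := by
      calc Metric.infDist (c (m + 1)) B ≤ dist (c (m + 1)) (d (m + 2)) :=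
            Metric.infDist_le_dist_of_mem (hd (m + 1)).1
        _ ≤ δ := by rw [dist_eq_norm]; exact hgap.le
    have := hδ (c (m + 1)) (by rw [hA]; simp [hB, hδpos.le])
    have hnn := Metric.infDist_nonneg (x := c (m + 1)) (s := A ∩ B)
    rw [Real.dist_eq, sub_zero, abs_of_nonneg hnn]
    linarith
  · rw [Metric.tendsto_atTop]
    intro ε hε
    obtain ⟨δ, hδpos, hδ⟩ := hreg (ε / 2) (by linarith)
    rw [Metric.tendsto_atTop] at h2
    obtain ⟨N, hN⟩ := h2 δ hδpos
    refine ⟨N + 1, fun n hn => ?_⟩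
    obtain ⟨m, rfl⟩ : ∃ m, n = m + 1 := ⟨n - 1, by omega⟩
    have hmN : N ≤ m := by omega
    have hgap : ‖d (m + 1) - c (m + 1)‖ < δ := by
      have := hN m hmN
      rwa [Real.dist_eq, sub_zero, abs_of_nonneg (norm_nonneg _)] at this
    have hB : Metric.infDist (d (m + 1)) B = 0 :=
      Metric.infDist_zero_of_mem (hd m).1
    have hA : Metric.infDist (d (m + 1)) A ≤ δ := by
      calc Metric.infDist (d (m + 1)) A ≤ dist (d (m + 1)) (c (m + 1)) :=
            Metric.infDist_le_dist_of_mem (hc m).1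
        _ ≤ δ := by rw [dist_eq_norm]; exact hgap.le
    have := hδ (d (m + 1)) (by rw [hB]; simp [hA, hδpos.le])
    have hnn := Metric.infDist_nonneg (x := d (m + 1)) (s := A ∩ B)
    rw [Real.dist_eq, sub_zero, abs_of_nonneg hnn]
    linarith
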